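/- For all x, y, z ∈ [0,1] such that y and z lie on the same side of x (i.e. (x−y)(x−z) ≥ 0), one has M[M[y,x], M[z,x]] ≥ M[M[y,z], x]. -/

import Mathlib

open MeasureTheory

noncomputable section

/-- The nonlinear mean `M[a,b] = (a+b)/√(4+(a-b)²)`. -/
def nlMean (a b : ℝ) : ℝ := (a + b) / Real.sqrt (4 + (a - b) ^ 2)

lemma nlMean_le_nlMean {α β γ δ : ℝ} (h1 : 0 ≤ α + β) (h2 : 0 ≤ γ + δ)
    (key : (α + β) ^ 2 * (4 + (γ - δ) ^ 2) ≤ (γ + δ) ^ 2 * (4 + (α - β) ^ 2)) :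
    nlMean α β ≤ nlMean γ δ := by
  have d1 : (0:ℝ) < Real.sqrt (4 + (α - β) ^ 2) := Real.sqrt_pos.2 (by positivity)
  have d2 : (0:ℝ) < Real.sqrt (4 + (γ - δ) ^ 2) := Real.sqrt_pos.2 (by positivity)
  unfold nlMean
  rw [div_le_div_iff₀ d1 d2]
  have l1 : (α + β) * Real.sqrt (4 + (γ - δ) ^ 2)
      = Real.sqrt ((α + β) ^ 2 * (4 + (γ - δ) ^ 2)) := by
    rw [Real.sqrt_mul (sq_nonneg _), Real.sqrt_sq h1]
  have l2 : (γ + δ) * Real.sqrt (4 + (α - β) ^ 2)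
      = Real.sqrt ((γ + δ) ^ 2 * (4 + (α - β) ^ 2)) := by
    rw [Real.sqrt_mul (sq_nonneg _), Real.sqrt_sq h2]
  rw [l1, l2]
  exact Real.sqrt_le_sqrt key

set_option maxHeartbeats 1000000 in
lemma aux_p0_nonpos (x y z : ℝ) (hx0 : 0 ≤ x) (hx1 : x ≤ 1) (hy0 : 0 ≤ y) (hy1 : y ≤ 1)
    (hz0 : 0 ≤ z) (hz1 : z ≤ 1) (hab : 0 ≤ (x - y) * (x - z)) :
    (((x+y)^2*(4+(z-x)^2) + (x+z)^2*(4+(y-x)^2))*(4+(y-z)^2) - (4+(y-x)^2)*(4+(z-x)^2)*((y+z)^2 + x^2*(4+(y-z)^2))) ≤ 0 := by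
  have ha1 : (x-y)^2 ≤ 1 := by nlinarith
  have hb1 : (x-z)^2 ≤ 1 := by nlinarith
  have hS : (-32 - 16*(x-z)^2 + 8*(x-y)*(x-z) + 1*(x-y)*(x-z)^3 - 16*(x-y)^2 - 6*(x-y)^2*(x-z)^2 + 1*(x-y)^3*(x-z) + 16*x*(x-z) - 4*x*(x-z)^3 + 16*x*(x-y) + 8*x*(x-y)*(x-z)^2 + 8*x*(x-y)^2*(x-z) - 4*x*(x-y)^3 - 32*x^2 - 8*x^2*(x-y)*(x-z) - 1*x^2*(x-y)*(x-z)^3 + 2*x^2*(x-y)^2*(x-z)^2 - 1*x^2*(x-y)^3*(x-z)) ≤ 0 := by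
    nlinarith [ha1, hb1, hab, sq_nonneg (x-y), sq_nonneg (x-z), mul_nonneg hx0 hx0,
      mul_nonneg hab (sq_nonneg (x-y)), mul_nonneg hab (sq_nonneg (x-z)),
      mul_nonneg (mul_nonneg hx0 hx0) hab, mul_le_one₀ ha1 (sq_nonneg (x-z)) hb1,
      mul_nonneg hx0 (sub_nonneg.2 ha1), mul_nonneg hx0 (sub_nonneg.2 hb1),
      sq_nonneg (x - y + (x - z)), sq_nonneg (x - y - (x - z)), sq_nonneg x]
  have hid : (((x+y)^2*(4+(z-x)^2) + (x+z)^2*(4+(y-x)^2))*(4+(y-z)^2) - (4+(y-x)^2)*(4+(z-x)^2)*((y+z)^2 + x^2*(4+(y-z)^2))) = -((x-y)*(x-z)*(-(-32 - 16*(x-z)^2 + 8*(x-y)*(x-z) + 1*(x-y)*(x-z)^3 - 16*(x-y)^2 - 6*(x-y)^2*(x-z)^2 + 1*(x-y)^3*(x-z) + 16*x*(x-z) - 4*x*(x-z)^3 + 16*x*(x-y) + 8*x*(x-y)*(x-z)^2 + 8*x*(x-y)^2*(x-z) - 4*x*(x-y)^3 - 32*x^2 - 8*x^2*(x-y)*(x-z)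 - 1*x^2*(x-y)*(x-z)^3 + 2*x^2*(x-y)^2*(x-z)^2 - 1*x^2*(x-y)^3*(x-z)))) := by ring
  have hprod := mul_nonneg hab (by linarith : (0:ℝ) ≤ -(-32 - 16*(x-z)^2 + 8*(x-y)*(x-z) + 1*(x-y)*(x-z)^3 - 16*(x-y)^2 - 6*(x-y)^2*(x-z)^2 + 1*(x-y)^3*(x-z) + 16*x*(x-z) - 4*x*(x-z)^3 + 16*x*(x-y) + 8*x*(x-y)*(x-z)^2 + 8*x*(x-y)^2*(x-z) - 4*x*(x-y)^3 - 32*x^2 - 8*x^2*(x-y)*(x-z) - 1*x^2*(x-y)*(x-z)^3 + 2*x^2*(x-y)^2*(x-z)^2 - 1*x^2*(x-y)^3*(x-z)))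
  linarith [hprod, hid.le, hid.ge]

set_option maxHeartbeats 1000000 in
lemma aux_R_nonneg (x y z : ℝ) (hx0 : 0 ≤ x) (hx1 : x ≤ 1) (hy0 : 0 ≤ y) (hy1 : y ≤ 1)
    (hz0 : 0 ≤ z) (hz1 : z ≤ 1) (hab : 0 ≤ (x - y) * (x - z)) :
    0 ≤ (8*(x-z)^2 + 24*(x-y)*(x-z) + 1*(x-y)*(x-z)^3 + 8*(x-y)^2 - 6*(x-y)^2*(x-z)^2 + 1*(x-y)^3*(x-z) - 64*x*(x-z) - 4*x*(x-z)^3 - 64*x*(x-y) + 24*x*(x-y)*(x-z)^2 + 24*x*(x-y)^2*(x-z) - 4*x*(x-y)^3 + 96*x^2 - 8*x^2*(x-z)^2 - 88*x^2*(x-y)*(x-z) - 1*x^2*(x-y)*(x-z)^3 - 8*x^2*(x-y)^2 + 2*x^2*(x-y)^2*(x-z)^2 - 1*x^2*(x-y)^3*(x-z) + 48*x^3*(x-z) + 48*x^3*(x-y) - 32*x^4) := by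
  have hw0 : (0:ℝ) ≤ y + z := by linarith
  have h1x2 : (0:ℝ) ≤ 1 - x^2 := by nlinarith
  have h4w : (0:ℝ) ≤ 4 - (y+z)^2 := by nlinarith
  have hE : 0 ≤ (32*x + 8*(y+z) + 32*x^3 - 32*x^2*(y+z) + 4*x*(y+z)^2) := by
    nlinarith [mul_nonneg hx0 (sq_nonneg (y+z-4*x)), mul_nonneg hx0 h1x2]
  have hwE : 0 ≤ (y+z) * (32*x + 8*(y+z) + 32*x^3 - 32*x^2*(y+z) + 4*x*(y+z)^2) := mul_nonneg hw0 hE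
  have hT : 0 ≤ (y+z) * (32*x + 8*(y+z) + 32*x^3 - 32*x^2*(y+z) + 4*x*(y+z)^2) + (x-(y+z)/2)^2 * (8 + 4*x^2 - 40*x*(y+z) + (y+z)^2 - 4*x^4 + 4*x^3*(y+z) - x^2*(y+z)^2) - (8 - 4*x^2) * ((x-(y+z)/2)^2)^2 := by
    nlinarith [mul_nonneg h4w (sq_nonneg (y+z)), mul_nonneg (mul_nonneg hx0 hw0) h4w,
      mul_nonneg (sq_nonneg (y+z)) h1x2, mul_nonneg (sq_nonneg x) h1x2,
      mul_nonneg (mul_nonneg (mul_nonneg hx0 hx0) hx0) hw0, mul_nonneg hx0 hw0,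
      sq_nonneg (y+z), sq_nonneg x]
  have hmp : (x-y)*(x-z) ≤ (x-(y+z)/2)^2 := by nlinarith [sq_nonneg (y-z)]
  have hcx : (0:ℝ) ≤ 8 - 4*x^2 := by nlinarith
  rcases le_total 0 ((8 + 4*x^2 - 40*x*(y+z) + (y+z)^2 - 4*x^4 + 4*x^3*(y+z) - x^2*(y+z)^2) - (8 - 4*x^2) * (x-(y+z)/2)^2) with hcase | hcase
  · nlinarith [hwE, mul_nonneg hab hcase,
      mul_nonneg (mul_nonneg hcx hab) (sub_nonneg.2 hmp)]
  · nlinarith [hT, mul_nonneg (sub_nonneg.2 hmp) (by linarith :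
      0 ≤ (8 - 4*x^2) * (x-(y+z)/2)^2 - (8 + 4*x^2 - 40*x*(y+z) + (y+z)^2 - 4*x^4 + 4*x^3*(y+z) - x^2*(y+z)^2)),
      mul_nonneg (mul_nonneg hcx hab) (sub_nonneg.2 hmp)]

set_option maxHeartbeats 1000000 in
lemma aux_Pstar (x y z : ℝ) (hx0 : 0 ≤ x) (hx1 : x ≤ 1) (hy0 : 0 ≤ y) (hy1 : y ≤ 1)
    (hz0 : 0 ≤ z) (hz1 : z ≤ 1) (hab : 0 ≤ (x - y) * (x - z)) :
    0 ≤ ((x+y)*(x+z)*((2+x^2)*(4+(y-z)^2)+(y+z)^2))*(8+2*((x-y)*(x-z))+2*(y-z)^2) - (x*(y+z)*(((x+y)^2*(4+(z-x)^2) + (x+z)^2*(4+(y-x)^2)) + 2*(4+(y-x)^2)*(4+(z-x)^2)))*(4+(y-z)^2) + (((x+y)^2*(4+(z-x)^2) + (x+z)^2*(4+(y-x)^2))*(4+(y-z)^2) - (4+(y-x)^2)*(4+(z-x)^2)*((y+z)^2 + x^2*(4+(y-z)^2)))*(2+(y-z)^2/4) := by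
  have hR := aux_R_nonneg x y z hx0 hx1 hy0 hy1 hz0 hz1 hab
  have hprod := mul_nonneg (mul_nonneg hab (sq_nonneg (y-z))) hR
  linarith [hprod, (by ring : ((x+y)*(x+z)*((2+x^2)*(4+(y-z)^2)+(y+z)^2))*(8+2*((x-y)*(x-z))+2*(y-z)^2) - (x*(y+z)*(((x+y)^2*(4+(z-x)^2) + (x+z)^2*(4+(y-x)^2)) + 2*(4+(y-x)^2)*(4+(z-x)^2)))*(4+(y-z)^2) + (((x+y)^2*(4+(z-x)^2) + (x+z)^2*(4+(y-x)^2))*(4+(y-z)^2) - (4+(y-x)^2)*(4+(z-x)^2)*((y+z)^2 + x^2*(4+(y-z)^2)))*(2+(y-z)^2/4)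
    = ((x-y)*(x-z)*(y-z)^2*(8*(x-z)^2 + 24*(x-y)*(x-z) + 1*(x-y)*(x-z)^3 + 8*(x-y)^2 - 6*(x-y)^2*(x-z)^2 + 1*(x-y)^3*(x-z) - 64*x*(x-z) - 4*x*(x-z)^3 - 64*x*(x-y) + 24*x*(x-y)*(x-z)^2 + 24*x*(x-y)^2*(x-z) - 4*x*(x-y)^3 + 96*x^2 - 8*x^2*(x-z)^2 - 88*x^2*(x-y)*(x-z) - 1*x^2*(x-y)*(x-z)^3 - 8*x^2*(x-y)^2 + 2*x^2*(x-y)^2*(x-z)^2 - 1*x^2*(x-y)^3*(x-z) + 48*x^3*(x-z) + 48*x^3*(x-y) - 32*x^4))/4)]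

lemma aux_sq_le (r t : ℝ) (ht : 0 < t) (hr : 0 ≤ r) (h : r^2 ≤ t^2) : r ≤ t := by
  nlinarith

set_option maxHeartbeats 2000000 in
theorem nlMean_same_side_inequality :
    ∀ x ∈ Set.Icc (0 : ℝ) 1, ∀ y ∈ Set.Icc (0 : ℝ) 1, ∀ z ∈ Set.Icc (0 : ℝ) 1,
      0 ≤ (x - y) * (x - z) →
      nlMean (nlMean y z) x ≤ nlMean (nlMean y x) (nlMean z x) := by
  intro x hx y hy z hz hab
  obtain ⟨hx0, hx1⟩ := hx
  obtain ⟨hy0, hy1⟩ := hy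
  obtain ⟨hz0, hz1⟩ := hz
  set A := Real.sqrt (4 + (y - x) ^ 2) with hA
  set B := Real.sqrt (4 + (z - x) ^ 2) with hB
  set C := Real.sqrt (4 + (y - z) ^ 2) with hC
  have hApos : 0 < A := Real.sqrt_pos.2 (by positivity)
  have hBpos : 0 < B := Real.sqrt_pos.2 (by positivity)
  have hCpos : 0 < C := Real.sqrt_pos.2 (by positivity)
  have hA2 : A ^ 2 = 4 + (y - x) ^ 2 := Real.sq_sqrt (by positivity)
  have hB2 : B ^ 2 = 4 + (z - x) ^ 2 := Real.sq_sqrt (by positivity)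
  have hC2 : C ^ 2 = 4 + (y - z) ^ 2 := Real.sq_sqrt (by positivity)
  have huv : nlMean y z = (y + z) / C := rfl
  have hPv : nlMean y x = (y + x) / A := rfl
  have hQv : nlMean z x = (z + x) / B := rfl
  have hp0 := aux_p0_nonpos x y z hx0 hx1 hy0 hy1 hz0 hz1 hab
  have hPstar := aux_Pstar x y z hx0 hx1 hy0 hy1 hz0 hz1 hab
  have hp2 : 0 ≤ ((x+y)*(x+z)*((2+x^2)*(4+(y-z)^2)+(y+z)^2)) := by
    have h1 : (0:ℝ) ≤ x + y := by linarith
    have h2 : (0:ℝ) ≤ x + z := by linarith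
    have h3 : (0:ℝ) ≤ (2+x^2)*(4+(y-z)^2)+(y+z)^2 := by positivity
    exact mul_nonneg (mul_nonneg h1 h2) h3
  have hABCsq : (A*B*C)^2 = (8+2*((x-y)*(x-z))+2*(y-z)^2)^2 + ((x-y)*(x-z)*(y-z))^2 := by
    linear_combination (B^2*C^2)*hA2 + ((4+(y-x)^2)*C^2)*hB2 + ((4+(y-x)^2)*(4+(z-x)^2))*hC2
  have hABC : 8+2*((x-y)*(x-z))+2*(y-z)^2 ≤ A*B*C := by
    refine aux_sq_le _ _ (by positivity) (by positivity) ?_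
    nlinarith [hABCsq, sq_nonneg ((x-y)*(x-z)*(y-z))]
  have hCub : C ≤ 2 + (y-z)^2/4 := by
    refine le_of_pow_le_pow_left₀ (n := 2) two_ne_zero (by positivity) ?_ |>.trans_eq rfl
    nlinarith [hC2, sq_nonneg ((y-z)*(y-z))]
  have hCFnn : 0 ≤ C * ((((x+y)^2*(4+(z-x)^2) + (x+z)^2*(4+(y-x)^2))*(4+(y-z)^2) - (4+(y-x)^2)*(4+(z-x)^2)*((y+z)^2 + x^2*(4+(y-z)^2))) + ((x+y)*(x+z)*((2+x^2)*(4+(y-z)^2)+(y+z)^2))*(A*B) - (x*(y+z)*(((x+y)^2*(4+(z-x)^2) + (x+z)^2*(4+(y-x)^2)) + 2*(4+(y-x)^2)*(4+(z-x)^2)))*C) := by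
    have t1 : (((x+y)^2*(4+(z-x)^2) + (x+z)^2*(4+(y-x)^2))*(4+(y-z)^2) - (4+(y-x)^2)*(4+(z-x)^2)*((y+z)^2 + x^2*(4+(y-z)^2)))*(2+(y-z)^2/4) ≤ (((x+y)^2*(4+(z-x)^2) + (x+z)^2*(4+(y-x)^2))*(4+(y-z)^2) - (4+(y-x)^2)*(4+(z-x)^2)*((y+z)^2 + x^2*(4+(y-z)^2)))*C := mul_le_mul_of_nonpos_left hCub hp0
    have t2 : ((x+y)*(x+z)*((2+x^2)*(4+(y-z)^2)+(y+z)^2))*(8+2*((x-y)*(x-z))+2*(y-z)^2) ≤ ((x+y)*(x+z)*((2+x^2)*(4+(y-z)^2)+(y+z)^2))*(A*B*C) := mul_le_mul_of_nonneg_left hABC hp2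
    have t3 : (x*(y+z)*(((x+y)^2*(4+(z-x)^2) + (x+z)^2*(4+(y-x)^2)) + 2*(4+(y-x)^2)*(4+(z-x)^2)))*C^2 = (x*(y+z)*(((x+y)^2*(4+(z-x)^2) + (x+z)^2*(4+(y-x)^2)) + 2*(4+(y-x)^2)*(4+(z-x)^2)))*(4+(y-z)^2) := by rw [hC2]
    have hexp : C * ((((x+y)^2*(4+(z-x)^2) + (x+z)^2*(4+(y-x)^2))*(4+(y-z)^2) - (4+(y-x)^2)*(4+(z-x)^2)*((y+z)^2 + x^2*(4+(y-z)^2))) + ((x+y)*(x+z)*((2+x^2)*(4+(y-z)^2)+(y+z)^2))*(A*B) - (x*(y+z)*(((x+y)^2*(4+(z-x)^2) + (x+z)^2*(4+(y-x)^2)) + 2*(4+(y-x)^2)*(4+(z-x)^2)))*C) = (((x+y)^2*(4+(z-x)^2) + (x+z)^2*(4+(y-x)^2))*(4+(y-z)^2) - (4+(y-x)^2)*(4+(z-x)^2)*((y+z)^2 + x^2*(4+(y-z)^2)))*C + ((x+y)*(x+z)*((2+x^2)*(4+(y-z)^2)+(y+z)^2))*(A*B*C) - (x*(y+z)*(((x+y)^2*(4+(z-x)^2)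 + (x+z)^2*(4+(y-x)^2)) + 2*(4+(y-x)^2)*(4+(z-x)^2)))*C^2 := by ring
    rw [hexp, t3]
    linarith [t1, t2, hPstar]
  have hF : 0 ≤ (((x+y)^2*(4+(z-x)^2) + (x+z)^2*(4+(y-x)^2))*(4+(y-z)^2) - (4+(y-x)^2)*(4+(z-x)^2)*((y+z)^2 + x^2*(4+(y-z)^2))) + ((x+y)*(x+z)*((2+x^2)*(4+(y-z)^2)+(y+z)^2))*(A*B) - (x*(y+z)*(((x+y)^2*(4+(z-x)^2) + (x+z)^2*(4+(y-x)^2)) + 2*(4+(y-x)^2)*(4+(z-x)^2)))*C := by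
    have h0 : C * 0 ≤ C * ((((x+y)^2*(4+(z-x)^2) + (x+z)^2*(4+(y-x)^2))*(4+(y-z)^2) - (4+(y-x)^2)*(4+(z-x)^2)*((y+z)^2 + x^2*(4+(y-z)^2))) + ((x+y)*(x+z)*((2+x^2)*(4+(y-z)^2)+(y+z)^2))*(A*B) - (x*(y+z)*(((x+y)^2*(4+(z-x)^2) + (x+z)^2*(4+(y-x)^2)) + 2*(4+(y-x)^2)*(4+(z-x)^2)))*C) := by linarith [hCFnn]
    exact le_of_mul_le_mul_left h0 hCpos
  have hNid : (((y+x)*B+(z+x)*A)^2 * (4*C^2 + ((y+z)-x*C)^2)) - (((y+z)+x*C)^2 * (4*(A^2*B^2) + ((y+x)*B - (z+x)*A)^2)) = 4*((((x+y)^2*(4+(z-x)^2) + (x+z)^2*(4+(y-x)^2))*(4+(y-z)^2) - (4+(y-x)^2)*(4+(z-x)^2)*((y+z)^2 + x^2*(4+(y-z)^2))) + ((x+y)*(x+z)*((2+x^2)*(4+(y-z)^2)+(y+z)^2))*(A*B) - (x*(y+z)*(((x+y)^2*(4+(z-x)^2) + (x+z)^2*(4+(y-x)^2)) + 2*(4+(y-x)^2)*(4+(z-x)^2)))*C)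 := by
    linear_combination (4*z^2*C^2 - 4*z^2*B^2 - 8*y*z*B^2 - 4*y^2*B^2 + 8*x*z*C^2 - 8*x*z*B^2*C - 4*x*z^3*C - 8*x*y*B^2*C - 4*x*y*z^2*C + 4*x^2*C^2 - 4*x^2*B^2*C^2 - 8*x^2*z^2*C - 8*x^2*y*z*C - 4*x^3*z*C - 4*x^3*y*C)*hA2 + (-16*z^2 - 32*y*z - 16*y^2 + 4*y^2*C^2 - 4*y^2*z^2 - 8*y^3*z - 4*y^4 - 32*x*z*C - 32*x*y*C + 8*x*y*C^2 + 8*x*y*z^2 + 16*x*y^2*z - 12*x*y^2*z*C + 8*x*y^3 - 12*x*y^3*C - 12*x^2*C^2 - 4*x^2*z^2 - 8*x^2*y*z + 8*x^2*y*z*C - 4*x^2*y^2 + 8*x^2*y^2*C - 4*x^2*y^2*C^2 - 12*x^3*z*C - 12*x^3*y*C + 8*x^3*y*C^2 - 4*x^4*C^2)*hB2 + (16*z^2 + 8*y*z*A*B + 16*y^2 + 8*y^2*z^2 + 32*x*z + 8*x*z*A*B + 32*x*y + 8*x*y*A*B - 32*x^2 + 8*x^2*A*B - 8*x^2*z^2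 - 32*x^2*y*z + 4*x^2*y*z*A*B - 8*x^2*y^2 - 4*x^2*y^2*z^2 + 32*x^3*z + 4*x^3*z*A*B + 32*x^3*y + 4*x^3*y*A*B + 8*x^3*y*z^2 + 8*x^3*y^2*z - 24*x^4 + 4*x^4*A*B - 4*x^4*z^2 - 16*x^4*y*z - 4*x^4*y^2 + 8*x^5*z + 8*x^5*y - 4*x^6)*hC2
  have hN : (((y+z)+x*C)^2 * (4*(A^2*B^2) + ((y+x)*B - (z+x)*A)^2)) ≤ (((y+x)*B+(z+x)*A)^2 * (4*C^2 + ((y+z)-x*C)^2)) := by linarith [hNid, hF]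
  apply nlMean_le_nlMean
  · have : 0 ≤ nlMean y z := by
      rw [huv]; exact div_nonneg (by linarith) hCpos.le
    linarith
  · have h1 : 0 ≤ nlMean y x := by
      rw [hPv]; exact div_nonneg (by linarith) hApos.le
    have h2 : 0 ≤ nlMean z x := by
      rw [hQv]; exact div_nonneg (by linarith) hBpos.le
    linarith
  · rw [huv, hPv, hQv]
    have hd : (0:ℝ) < A^2*B^2*C^2 := by positivity
    rw [← mul_le_mul_iff_of_pos_right hd]
    have e0 : ((y + z) / C + x)^2 * (4 + ((y + x) / A - (z + x) / B)^2) * (A^2*B^2*C^2) = (((y+z)+x*C)^2 * (4*(A^2*B^2) + ((y+x)*B - (z+x)*A)^2)) := by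
      field_simp
    have e1 : ((y + x) / A + (z + x) / B)^2 * (4 + ((y + z) / C - x)^2) * (A^2*B^2*C^2) = (((y+x)*B+(z+x)*A)^2 * (4*C^2 + ((y+z)-x*C)^2)) := by
      field_simp
    rw [e0, e1]
    exact hN
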